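/- Fix m > 1 and let (ω_j, Φ_j, ξ_j), j = 1, …, m−1, be weak solutions of the sloshing problem with surface tension on (D, F) with Bond number Bo, such that the absolute values |ω_j| are pairwise distinct and ⟨Φ_j,ξ_j⟩_F ≠ 0 for each j. Let 𝒜_m be the set of pairs (Φ,ξ) ∈ 𝒜 with ∫_F Φ(p,0) ξ_j(p) dp = 0 and ∫_F ξ(p) Φ_j(p,0) dp = 0 for all j = 1, …, m−1. Suppose (Φ_m, ξ_m) ∈ 𝒜_m satisfies ⟨Φ_m,ξ_m⟩_F = 1 and D[Φ_m] + S[ξ_m] ≤ D[Φ] + S[ξ] for every (Φ,ξ) ∈ 𝒜_m with ⟨Φ,ξ⟩_F = 1. Then, with ω_m = D[Φ_m] + S[ξ_m], the triple (ω_m, Φ_m, ξ_m) is a weak solution of the sloshing problem with surface tension on (D, F). -/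

import Mathlib

open MeasureTheory RealInnerProductSpace

noncomputable section

abbrev E2 : Type := EuclideanSpace ℝ (Fin 2)
abbrev E3 : Type := EuclideanSpace ℝ (Fin 3)

/-- Embedding of the free surface plane: `p = (x,y) ↦ (x,y,0)`. -/
def emb (p : E2) : E3 := (WithLp.equiv 2 (Fin 3 → ℝ)).symm ![p 0, p 1, 0]

/-- Dirichlet energy `D[Φ] = (1/2)∫_D ‖∇Φ‖²`. -/
def Dir (D : Set E3) (Φ : E3 → ℝ) : ℝ := (1/2) * ∫ x in D, ‖gradient Φ x‖^2

/-- Free surface energy `S[ξ] = (1/2)∫_F (ξ² + Bo⁻¹‖∇ξ‖²)`. -/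
def Surf (F : Set E2) (Bo : ℝ) (ξ : E2 → ℝ) : ℝ :=
  (1/2) * ∫ p in F, (ξ p ^ 2 + Bo⁻¹ * ‖gradient ξ p‖^2)

/-- The pairing `⟨Φ,ξ⟩_F = ∫_F Φ(x,y,0) ξ(x,y)`. -/
def pairF (F : Set E2) (Φ : E3 → ℝ) (ξ : E2 → ℝ) : ℝ := ∫ p in F, Φ (emb p) * ξ p

/-- `(ω,Φ,ξ)` is a weak solution of the sloshing problem with surface tension. -/
def IsWeakSol (D : Set E3) (F : Set E2) (Bo ω : ℝ) (Φ : E3 → ℝ) (ξ : E2 → ℝ) : Prop :=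
  ContDiff ℝ 1 Φ ∧ ContDiff ℝ 1 ξ ∧
  (∀ f : E3 → ℝ, ContDiff ℝ 1 f →
    (∫ x in D, ⟪gradient Φ x, gradient f x⟫) = ω * ∫ p in F, ξ p * f (emb p)) ∧
  (∀ g : E2 → ℝ, ContDiff ℝ 1 g →
    (∫ p in F, (ξ p * g p + Bo⁻¹ * ⟪gradient ξ p, gradient g p⟫))
      = ω * ∫ p in F, Φ (emb p) * g p)

/-- The admissible class `𝒜`: pairs of C¹ functions with zero mean over `F`. -/
def Adm (F : Set E2) (Φ : E3 → ℝ) (ξ : E2 → ℝ) : Prop :=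
  ContDiff ℝ 1 Φ ∧ ContDiff ℝ 1 ξ ∧
  (∫ p in F, Φ (emb p)) = 0 ∧ (∫ p in F, ξ p) = 0

section Helpers
variable {n : ℕ}
lemma integrableOn_cont {s : Set (EuclideanSpace ℝ (Fin n))} (hb : Bornology.IsBounded s)
    {h : EuclideanSpace ℝ (Fin n) → ℝ} (hc : Continuous h) : IntegrableOn h s volume :=
  (hc.continuousOn.integrableOn_compact hb.isCompact_closure).mono_set subset_closure

lemma continuous_gradient {f : EuclideanSpace ℝ (Fin n) → ℝ} (hf : ContDiff ℝ 1 f) :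
    Continuous (gradient f) :=
  (LinearIsometryEquiv.continuous _).comp (hf.continuous_fderiv one_ne_zero)

lemma gradient_add_smul {f g : EuclideanSpace ℝ (Fin n) → ℝ} (hf : ContDiff ℝ 1 f)
    (hg : ContDiff ℝ 1 g) (t : ℝ) (x : EuclideanSpace ℝ (Fin n)) :
    gradient (fun y => f y + t * g y) x = gradient f x + t • gradient g x := by
  have h1 := (hf.differentiable one_ne_zero x).hasFDerivAt
  have h2 := ((hg.differentiable one_ne_zero x).hasFDerivAt).const_mul t
  have h3 : fderiv ℝ (fun y => f y + t * g y) x = fderiv ℝ f x + t • fderiv ℝ g x :=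
    (h1.add h2).fderiv
  show (InnerProductSpace.toDual ℝ _).symm _ = _
  rw [h3, map_add, LinearIsometryEquiv.map_smul]
  rfl

lemma gradient_const_mul {f : EuclideanSpace ℝ (Fin n) → ℝ} (hf : ContDiff ℝ 1 f) (s : ℝ)
    (x : EuclideanSpace ℝ (Fin n)) :
    gradient (fun y => s * f y) x = s • gradient f x := by
  have h2 := ((hf.differentiable one_ne_zero x).hasFDerivAt).const_mul s
  show (InnerProductSpace.toDual ℝ _).symm _ = _
  rw [h2.fderiv, LinearIsometryEquiv.map_smul]
  rfl

lemma continuous_emb : Continuous emb := by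
  unfold emb
  refine (PiLp.continuous_toLp _ _).comp ?_
  refine continuous_pi fun i => ?_
  fin_cases i
  · exact (show Continuous fun a : E2 => a.ofLp 0 from
      (continuous_apply 0).comp (PiLp.continuous_ofLp _ _))
  · exact (show Continuous fun a : E2 => a.ofLp 1 from
      (continuous_apply 1).comp (PiLp.continuous_ofLp _ _))
  · exact continuous_const
end Helpers


lemma integral_add3 {α : Type*} [MeasurableSpace α] {μ : MeasureTheory.Measure α} {A B C : α → ℝ}
    (hA : Integrable A μ) (hB : Integrable B μ) (hC : Integrable C μ) :
    ∫ x, (A x + (B x + C x)) ∂μ = (∫ x, A x ∂μ) + (∫ x, B x ∂μ) + (∫ x, C x ∂μ) := by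
  have h1 : ∫ x, (A x + (B x + C x)) ∂μ = (∫ x, A x ∂μ) + ∫ x, (B x + C x) ∂μ :=
    integral_add hA (hB.add hC)
  have h2 : ∫ x, (B x + C x) ∂μ = (∫ x, B x ∂μ) + ∫ x, C x ∂μ := integral_add hB hC
  rw [h1, h2]; ring

section Expand
variable {D : Set E3} {F : Set E2}

lemma Dir_expand (hD : Bornology.IsBounded D) {Φ f : E3 → ℝ}
    (hΦ : ContDiff ℝ 1 Φ) (hf : ContDiff ℝ 1 f) (t : ℝ) :
    Dir D (fun x => Φ x + t * f x)
      = Dir D Φ + t * (∫ x in D, ⟪gradient Φ x, gradient f x⟫) + t^2 * Dir D f := by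
  have key : ∀ x : E3, ‖gradient (fun y => Φ y + t * f y) x‖^2
      = ‖gradient Φ x‖^2 + (2*t*⟪gradient Φ x, gradient f x⟫ + t^2*‖gradient f x‖^2) := by
    intro x
    rw [gradient_add_smul hΦ hf t x, norm_add_sq_real, real_inner_smul_right, norm_smul]
    simp [mul_pow, sq_abs]; ring
  have i1 : IntegrableOn (fun x => ‖gradient Φ x‖^2) D volume :=
    integrableOn_cont hD ((continuous_gradient hΦ).norm.pow 2)
  have i2 : IntegrableOn (fun x => 2*t*⟪gradient Φ x, gradient f x⟫) D volume :=
    integrableOn_cont hD (continuous_const.mul ((continuous_gradient hΦ).inner (continuous_gradient hf)))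
  have i3 : IntegrableOn (fun x => t^2*‖gradient f x‖^2) D volume :=
    integrableOn_cont hD (continuous_const.mul ((continuous_gradient hf).norm.pow 2))
  have : (fun x => ‖gradient (fun y => Φ y + t * f y) x‖^2)
      = fun x => ‖gradient Φ x‖^2 + (2*t*⟪gradient Φ x, gradient f x⟫ + t^2*‖gradient f x‖^2) :=
    funext key
  rw [Dir, Dir, Dir, this, integral_add3 i1 i2 i3, integral_const_mul, integral_const_mul]
  ring

lemma Surf_expand (hF : Bornology.IsBounded F) (Bo : ℝ) {ξ g : E2 → ℝ}
    (hξ : ContDiff ℝ 1 ξ) (hg : ContDiff ℝ 1 g) (t : ℝ) :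
    Surf F Bo (fun p => ξ p + t * g p)
      = Surf F Bo ξ
        + t * (∫ p in F, (ξ p * g p + Bo⁻¹ * ⟪gradient ξ p, gradient g p⟫))
        + t^2 * Surf F Bo g := by
  have key : ∀ p : E2, ((ξ p + t * g p)^2 + Bo⁻¹ * ‖gradient (fun y => ξ y + t * g y) p‖^2)
      = (ξ p^2 + Bo⁻¹*‖gradient ξ p‖^2)
        + (2*t*(ξ p * g p + Bo⁻¹ * ⟪gradient ξ p, gradient g p⟫)
          + t^2*(g p^2 + Bo⁻¹*‖gradient g p‖^2)) := by
    intro p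
    rw [gradient_add_smul hξ hg t p, norm_add_sq_real, real_inner_smul_right, norm_smul]
    simp [mul_pow, sq_abs]; ring
  have c1 : Continuous fun p : E2 => ξ p^2 + Bo⁻¹*‖gradient ξ p‖^2 :=
    ((hξ.continuous.pow 2).add (continuous_const.mul ((continuous_gradient hξ).norm.pow 2)))
  have c2 : Continuous fun p : E2 => 2*t*(ξ p * g p + Bo⁻¹ * ⟪gradient ξ p, gradient g p⟫) :=
    continuous_const.mul ((hξ.continuous.mul hg.continuous).add
      (continuous_const.mul ((continuous_gradient hξ).inner (continuous_gradient hg))))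
  have c3 : Continuous fun p : E2 => t^2*(g p^2 + Bo⁻¹*‖gradient g p‖^2) :=
    continuous_const.mul ((hg.continuous.pow 2).add (continuous_const.mul ((continuous_gradient hg).norm.pow 2)))
  have i1 := integrableOn_cont hF c1
  have i2 := integrableOn_cont hF c2
  have i3 := integrableOn_cont hF c3
  have : (fun p => ((ξ p + t * g p)^2 + Bo⁻¹ * ‖gradient (fun y => ξ y + t * g y) p‖^2))
      = fun p => (ξ p^2 + Bo⁻¹*‖gradient ξ p‖^2)
        + (2*t*(ξ p * g p + Bo⁻¹ * ⟪gradient ξ p, gradient g p⟫)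
          + t^2*(g p^2 + Bo⁻¹*‖gradient g p‖^2)) := funext key
  rw [Surf, Surf, Surf, this, integral_add3 i1 i2 i3, integral_const_mul, integral_const_mul]
  ring

lemma pairF_expand (hF : Bornology.IsBounded F) {Φ f : E3 → ℝ} {ξ g : E2 → ℝ}
    (hΦ : ContDiff ℝ 1 Φ) (hf : ContDiff ℝ 1 f) (hξ : ContDiff ℝ 1 ξ) (hg : ContDiff ℝ 1 g) (t : ℝ) :
    pairF F (fun x => Φ x + t * f x) (fun p => ξ p + t * g p)
      = pairF F Φ ξ
        + t * ((∫ p in F, Φ (emb p) * g p) + (∫ p in F, f (emb p) * ξ p))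
        + t^2 * pairF F f g := by
  have key : ∀ p : E2, (Φ (emb p) + t * f (emb p)) * (ξ p + t * g p)
      = Φ (emb p) * ξ p + (t * (Φ (emb p) * g p + f (emb p) * ξ p) + t^2 * (f (emb p) * g p)) := by
    intro p; ring
  have cΦ : Continuous fun p : E2 => Φ (emb p) := hΦ.continuous.comp continuous_emb
  have cf : Continuous fun p : E2 => f (emb p) := hf.continuous.comp continuous_emb
  have i1 : IntegrableOn (fun p => Φ (emb p) * ξ p) F volume := integrableOn_cont hF (cΦ.mul hξ.continuous)
  have i2 : IntegrableOn (fun p => t * (Φ (emb p) * g p + f (emb p) * ξ p)) F volume :=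
    integrableOn_cont hF (continuous_const.mul ((cΦ.mul hg.continuous).add (cf.mul hξ.continuous)))
  have i3 : IntegrableOn (fun p => t^2 * (f (emb p) * g p)) F volume :=
    integrableOn_cont hF (continuous_const.mul (cf.mul hg.continuous))
  have : (fun p => (Φ (emb p) + t * f (emb p)) * (ξ p + t * g p))
      = fun p => Φ (emb p) * ξ p + (t * (Φ (emb p) * g p + f (emb p) * ξ p) + t^2 * (f (emb p) * g p)) :=
    funext key
  rw [pairF, pairF, pairF]
  show (∫ p in F, (Φ (emb p) + t * f (emb p)) * (ξ p + t * g p)) = _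
  have ia : IntegrableOn (fun p => Φ (emb p) * g p) F volume :=
    integrableOn_cont hF (cΦ.mul hg.continuous)
  have ib : IntegrableOn (fun p => f (emb p) * ξ p) F volume :=
    integrableOn_cont hF (cf.mul hξ.continuous)
  have hsplit : (∫ p in F, (Φ (emb p) * g p + f (emb p) * ξ p))
      = (∫ p in F, Φ (emb p) * g p) + ∫ p in F, f (emb p) * ξ p := integral_add ia ib
  rw [this, integral_add3 i1 i2 i3, integral_const_mul, integral_const_mul, hsplit]

lemma Dir_smul {Φ : E3 → ℝ} (hΦ : ContDiff ℝ 1 Φ) (s : ℝ) :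
    Dir D (fun x => s * Φ x) = s^2 * Dir D Φ := by
  have : (fun x : E3 => ‖gradient (fun y => s * Φ y) x‖^2) = fun x => s^2 * ‖gradient Φ x‖^2 := by
    funext x
    rw [gradient_const_mul hΦ s x, norm_smul]
    simp [mul_pow, sq_abs]
  rw [Dir, Dir, this, integral_const_mul]
  try ring

lemma Surf_smul (Bo : ℝ) {ξ : E2 → ℝ} (hξ : ContDiff ℝ 1 ξ) (s : ℝ) :
    Surf F Bo (fun p => s * ξ p) = s^2 * Surf F Bo ξ := by
  have : (fun p : E2 => ((s * ξ p)^2 + Bo⁻¹ * ‖gradient (fun y => s * ξ y) p‖^2))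
      = fun p => s^2 * (ξ p^2 + Bo⁻¹ * ‖gradient ξ p‖^2) := by
    funext p
    rw [gradient_const_mul hξ s p, norm_smul]
    simp [mul_pow, sq_abs]; ring
  rw [Surf, Surf, this, integral_const_mul]
  try ring

lemma pairF_smul {Φ : E3 → ℝ} {ξ : E2 → ℝ} (s : ℝ) :
    pairF F (fun x => s * Φ x) (fun p => s * ξ p) = s^2 * pairF F Φ ξ := by
  rw [pairF, pairF]
  show (∫ p in F, (s * Φ (emb p)) * (s * ξ p)) = _
  rw [← integral_const_mul]
  congr 1; funext p; ring

lemma lin_zero {α β δ : ℝ} (hδ : 0 < δ) (h : ∀ t : ℝ, |t| < δ → 0 ≤ t*α + t^2*β) : α = 0 := by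
  by_contra hα
  set ε := min (δ/2) (|α|/(2*(|β|+1))) with hε
  have hβ : 0 < |β| + 1 := by positivity
  have hαpos : 0 < |α| := abs_pos.mpr hα
  have hεpos : 0 < ε := lt_min (by linarith) (by positivity)
  have hεδ : ε < δ := lt_of_le_of_lt (min_le_left _ _) (by linarith)
  have hεα : ε ≤ |α|/(2*(|β|+1)) := min_le_right _ _
  have hβab : β ≤ |β| := le_abs_self β
  have hβab2 : -|β| ≤ β := neg_abs_le β
  have hkey : ε * (2*(|β|+1)) ≤ |α| := by
    rw [← le_div_iff₀ (by positivity : (0:ℝ) < 2*(|β|+1))]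
    exact hεα
  rcases lt_or_gt_of_ne hα with hneg | hpos
  · have h1 := h ε (by rw [abs_of_pos hεpos]; exact hεδ)
    have habs : |α| = -α := abs_of_neg hneg
    nlinarith [mul_pos hεpos hεpos, sq_nonneg ε]
  · have h1 := h (-ε) (by rw [abs_neg, abs_of_pos hεpos]; exact hεδ)
    have habs : |α| = α := abs_of_pos hpos
    nlinarith [mul_pos hεpos hεpos, sq_nonneg ε]
end Expand
section Helpers2
variable {n : ℕ}
lemma gradient_correction {N : ℕ} {f : EuclideanSpace ℝ (Fin n) → ℝ}
    {v : Fin N → EuclideanSpace ℝ (Fin n) → ℝ}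
    (hf : ContDiff ℝ 1 f) (hv : ∀ j, ContDiff ℝ 1 (v j)) (c₀ : ℝ) (c : Fin N → ℝ)
    (x : EuclideanSpace ℝ (Fin n)) :
    gradient (fun y => f y - c₀ - ∑ j, c j * v j y) x
      = gradient f x - ∑ j, c j • gradient (v j) x := by
  have h2 : HasFDerivAt (fun y => ∑ j, c j * v j y) (∑ j, c j • fderiv ℝ (v j) x) x :=
    HasFDerivAt.fun_sum fun j _ => (((hv j).differentiable one_ne_zero x).hasFDerivAt).const_mul (c j)
  have H : HasFDerivAt (fun y => f y - c₀ - ∑ j, c j * v j y)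
      (fderiv ℝ f x - ∑ j, c j • fderiv ℝ (v j) x) x :=
    (((hf.differentiable one_ne_zero x).hasFDerivAt).sub_const c₀).sub h2
  show (InnerProductSpace.toDual ℝ _).symm _ = _
  rw [H.fderiv, map_sub, map_sum]
  congr 1
  refine Finset.sum_congr rfl fun j _ => ?_
  rw [LinearIsometryEquiv.map_smul]; rfl

lemma int_correction {F : Set E2} (hF : Bornology.IsBounded F) {N : ℕ} {u w : E2 → ℝ}
    {v : Fin N → E2 → ℝ} (hu : Continuous u) (hw : Continuous w) (hv : ∀ j, Continuous (v j))
    (c₀ : ℝ) (c : Fin N → ℝ) :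
    (∫ p in F, (u p - c₀ - ∑ j, c j * v j p) * w p)
      = (∫ p in F, u p * w p) - c₀ * (∫ p in F, w p)
        - ∑ j, c j * ∫ p in F, v j p * w p := by
  have key : (fun p => (u p - c₀ - ∑ j, c j * v j p) * w p)
      = fun p => u p * w p - c₀ * w p - ∑ j, c j * (v j p * w p) := by
    funext p
    rw [sub_mul, sub_mul, Finset.sum_mul]
    simp [mul_assoc]
  have iA : IntegrableOn (fun p => u p * w p) F volume := integrableOn_cont hF (hu.mul hw)
  have iB : IntegrableOn (fun p => c₀ * w p) F volume :=
    integrableOn_cont hF (continuous_const.mul hw)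
  have iC : ∀ j : Fin N, IntegrableOn (fun p => c j * (v j p * w p)) F volume := fun j =>
    integrableOn_cont hF (continuous_const.mul ((hv j).mul hw))
  have iCs : IntegrableOn (fun p => ∑ j, c j * (v j p * w p)) F volume :=
    integrable_finset_sum _ fun j _ => iC j
  have hs1 : (∫ p in F, (u p * w p - c₀ * w p - ∑ j, c j * (v j p * w p)))
      = (∫ p in F, (u p * w p - c₀ * w p)) - ∫ p in F, ∑ j, c j * (v j p * w p) :=
    integral_sub (iA.sub iB) iCs
  have hs2 : (∫ p in F, (u p * w p - c₀ * w p))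
      = (∫ p in F, u p * w p) - ∫ p in F, c₀ * w p := integral_sub iA iB
  rw [key, hs1, hs2, integral_const_mul, integral_finset_sum _ fun j _ => iC j]
  congr 1
  refine Finset.sum_congr rfl fun j _ => ?_
  rw [integral_const_mul]

lemma int_correction_mean {F : Set E2} (hF : Bornology.IsBounded F) {N : ℕ} {u : E2 → ℝ}
    {v : Fin N → E2 → ℝ} (hu : Continuous u) (hv : ∀ j, Continuous (v j))
    (c₀ : ℝ) (c : Fin N → ℝ) :
    (∫ p in F, (u p - c₀ - ∑ j, c j * v j p))
      = (∫ p in F, u p) - c₀ * (volume F).toReal - ∑ j, c j * ∫ p in F, v j p := by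
  have iA : IntegrableOn u F volume := integrableOn_cont hF hu
  have iB : IntegrableOn (fun _ : E2 => c₀) F volume := integrableOn_cont hF continuous_const
  have iC : ∀ j : Fin N, IntegrableOn (fun p => c j * v j p) F volume := fun j =>
    integrableOn_cont hF (continuous_const.mul (hv j))
  have iCs : IntegrableOn (fun p => ∑ j, c j * v j p) F volume :=
    integrable_finset_sum _ fun j _ => iC j
  have hs1 : (∫ p in F, (u p - c₀ - ∑ j, c j * v j p))
      = (∫ p in F, (u p - c₀)) - ∫ p in F, ∑ j, c j * v j p :=
    integral_sub (iA.sub iB) iCs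
  have hs2 : (∫ p in F, (u p - c₀)) = (∫ p in F, u p) - ∫ p in F, (c₀ : ℝ) := integral_sub iA iB
  rw [hs1, hs2, integral_finset_sum _ fun j _ => iC j]
  simp only [setIntegral_const, smul_eq_mul]
  rw [mul_comm]
  congr 1
  refine Finset.sum_congr rfl fun j _ => ?_
  rw [integral_const_mul]

lemma int_comm {F : Set E2} (a b : E2 → ℝ) :
    (∫ p in F, a p * b p) = ∫ p in F, b p * a p := by
  congr 1; funext p; ring

lemma int_affine {F : Set E2} (hF : Bornology.IsBounded F) {u v w : E2 → ℝ}
    (hu : Continuous u) (hv : Continuous v) (hw : Continuous w) (s t : ℝ) :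
    (∫ p in F, (s * (u p + t * v p)) * w p)
      = s * ((∫ p in F, u p * w p) + t * ∫ p in F, v p * w p) := by
  have key : (fun p => (s * (u p + t * v p)) * w p)
      = fun p => s * (u p * w p + t * (v p * w p)) := by funext p; ring
  rw [key, integral_const_mul,
    integral_add (integrableOn_cont hF (hu.mul hw) : IntegrableOn (fun p => u p * w p) F volume)
      (integrableOn_cont hF (continuous_const.mul (hv.mul hw)) :
        IntegrableOn (fun p => t * (v p * w p)) F volume), integral_const_mul]

lemma int_affine_mean {F : Set E2} (hF : Bornology.IsBounded F) {u v : E2 → ℝ}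
    (hu : Continuous u) (hv : Continuous v) (s t : ℝ) :
    (∫ p in F, s * (u p + t * v p)) = s * ((∫ p in F, u p) + t * ∫ p in F, v p) := by
  rw [integral_const_mul,
    integral_add (integrableOn_cont hF hu)
      (integrableOn_cont hF (continuous_const.mul hv) : IntegrableOn (fun p => t * v p) F volume),
    integral_const_mul]
end Helpers2

lemma step1_lemma
    (D : Set E3) (F : Set E2) (hD : Bornology.IsBounded D) (hF : Bornology.IsBounded F)
    (Bo : ℝ) {N : ℕ} (Φs : Fin N → E3 → ℝ) (ξs : Fin N → E2 → ℝ)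
    (hCΦ : ∀ j, Continuous (Φs j)) (hCξ : ∀ j, Continuous (ξs j))
    (Φm : E3 → ℝ) (ξm : E2 → ℝ) (hΦm : ContDiff ℝ 1 Φm) (hξm : ContDiff ℝ 1 ξm)
    (hpair : pairF F Φm ξm = 1)
    (hmin : ∀ Φ : E3 → ℝ, ∀ ξ : E2 → ℝ, Adm F Φ ξ →
      (∀ j, (∫ p in F, Φ (emb p) * ξs j p) = 0 ∧
        (∫ p in F, ξ p * Φs j (emb p)) = 0) →
      pairF F Φ ξ = 1 →
      Dir D Φm + Surf F Bo ξm ≤ Dir D Φ + Surf F Bo ξ)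
    (f : E3 → ℝ) (g : E2 → ℝ) (hf : ContDiff ℝ 1 f) (hg : ContDiff ℝ 1 g)
    (hfmean : (∫ p in F, f (emb p)) = 0) (hgmean : (∫ p in F, g p) = 0)
    (hΦm0 : (∫ p in F, Φm (emb p)) = 0) (hξm0 : (∫ p in F, ξm p) = 0)
    (hforth : ∀ j, (∫ p in F, f (emb p) * ξs j p) = 0 ∧
      (∫ p in F, g p * Φs j (emb p)) = 0)
    (horth : ∀ j, (∫ p in F, Φm (emb p) * ξs j p) = 0 ∧
      (∫ p in F, ξm p * Φs j (emb p)) = 0) :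
    (∫ x in D, ⟪gradient Φm x, gradient f x⟫)
      + (∫ p in F, (ξm p * g p + Bo⁻¹ * ⟪gradient ξm p, gradient g p⟫))
    = (Dir D Φm + Surf F Bo ξm)
      * ((∫ p in F, Φm (emb p) * g p) + (∫ p in F, f (emb p) * ξm p)) := by
  set ω := Dir D Φm + Surf F Bo ξm with hωdef
  set A := (∫ x in D, ⟪gradient Φm x, gradient f x⟫)
    + (∫ p in F, (ξm p * g p + Bo⁻¹ * ⟪gradient ξm p, gradient g p⟫)) with hAdef
  set Q := (∫ p in F, Φm (emb p) * g p) + (∫ p in F, f (emb p) * ξm p) with hQdef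
  set Ev := Dir D f + Surf F Bo g with hEvdef
  set R := pairF F f g with hRdef
  set δ := (1 + |Q| + |R|)⁻¹ with hδdef
  have hδpos : 0 < δ := by rw [hδdef]; positivity
  have hδ1 : δ ≤ 1 := by
    rw [hδdef]
    have h1 : (1:ℝ) ≤ 1 + |Q| + |R| := by
      have := abs_nonneg Q; have := abs_nonneg R; linarith
    exact inv_le_one_of_one_le₀ h1
  have e1 : δ * (1 + |Q| + |R|) = 1 := by
    rw [hδdef]; exact inv_mul_cancel₀ (by positivity)
  have hPpos : ∀ t : ℝ, |t| < δ → 0 < 1 + t*Q + t^2*R := by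
    intro t ht
    have a1 : -(|t| * |Q|) ≤ t*Q := by rw [← abs_mul]; exact neg_abs_le _
    have a2 : -(|t| * |R|) ≤ t^2*R := by
      have h0 : 0 ≤ |R| * |t| * (1 - |t|) :=
        mul_nonneg (mul_nonneg (abs_nonneg R) (abs_nonneg t)) (by linarith [ht.trans_le hδ1])
      nlinarith [sq_abs t, neg_abs_le R, sq_nonneg t, abs_nonneg t, abs_nonneg R]
    have a3 : |t| * (|Q| + |R|) ≤ δ * (|Q| + |R|) :=
      mul_le_mul_of_nonneg_right ht.le (by positivity)
    nlinarith [abs_nonneg t, abs_nonneg Q, abs_nonneg R, hδpos]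
  have hineq : ∀ t : ℝ, |t| < δ → 0 ≤ t*(A - ω*Q) + t^2*(Ev - ω*R) := by
    intro t ht
    have hP := hPpos t ht
    set st := (Real.sqrt (1 + t*Q + t^2*R))⁻¹ with hstdef
    have hsq : st^2 = (1 + t*Q + t^2*R)⁻¹ := by
      rw [hstdef, inv_pow, Real.sq_sqrt hP.le]
    have hΦ1 : ContDiff ℝ 1 (fun x => Φm x + t * f x) := hΦm.add (contDiff_const.mul hf)
    have hξ1 : ContDiff ℝ 1 (fun p => ξm p + t * g p) := hξm.add (contDiff_const.mul hg)
    have hΦ' : ContDiff ℝ 1 (fun x => st * (Φm x + t * f x)) := contDiff_const.mul hΦ1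
    have hξ' : ContDiff ℝ 1 (fun p => st * (ξm p + t * g p)) := contDiff_const.mul hξ1
    have cΦm : Continuous fun p : E2 => Φm (emb p) := hΦm.continuous.comp continuous_emb
    have cf : Continuous fun p : E2 => f (emb p) := hf.continuous.comp continuous_emb
    have hadm' : Adm F (fun x => st * (Φm x + t * f x)) (fun p => st * (ξm p + t * g p)) := by
      refine ⟨hΦ', hξ', ?_, ?_⟩
      · show (∫ p in F, st * (Φm (emb p) + t * f (emb p))) = 0
        rw [int_affine_mean hF cΦm cf st t, hΦm0, hfmean]; ring
      · show (∫ p in F, st * (ξm p + t * g p)) = 0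
        rw [int_affine_mean hF hξm.continuous hg.continuous st t, hξm0, hgmean]; ring
    have horth' : ∀ j, (∫ p in F, (fun x => st * (Φm x + t * f x)) (emb p) * ξs j p) = 0 ∧
        (∫ p in F, (fun p => st * (ξm p + t * g p)) p * Φs j (emb p)) = 0 := by
      intro j
      constructor
      · show (∫ p in F, (st * (Φm (emb p) + t * f (emb p))) * ξs j p) = 0
        rw [int_affine hF cΦm cf (hCξ j) st t, (horth j).1, (hforth j).1]; ring
      · show (∫ p in F, (st * (ξm p + t * g p)) * Φs j (emb p)) = 0
        have cΦj : Continuous fun p : E2 => Φs j (emb p) := (hCΦ j).comp continuous_emb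
        rw [int_affine hF hξm.continuous hg.continuous cΦj st t, (horth j).2, (hforth j).2]
        ring
    have hPair' : pairF F (fun x => st * (Φm x + t * f x)) (fun p => st * (ξm p + t * g p)) = 1 := by
      rw [pairF_smul st, pairF_expand hF hΦm hf hξm hg t, hpair, ← hQdef, ← hRdef, hsq]
      exact inv_mul_cancel₀ hP.ne'
    have hE : Dir D (fun x => st * (Φm x + t * f x)) + Surf F Bo (fun p => st * (ξm p + t * g p))
        = st^2 * (ω + t*A + t^2*Ev) := by
      rw [Dir_smul hΦ1 st, Surf_smul Bo hξ1 st, Dir_expand hD hΦm hf t,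
        Surf_expand hF Bo hξm hg t, hωdef, hAdef, hEvdef]
      ring
    have hm := hmin _ _ hadm' horth' hPair'
    rw [hE, hsq, inv_mul_eq_div, le_div_iff₀ hP] at hm
    nlinarith [hm]
  have hz := lin_zero hδpos hineq
  linarith [hz]

lemma int_sub_sub {α : Type*} [MeasurableSpace α] {μ : MeasureTheory.Measure α} {N : ℕ}
    {A B : α → ℝ} {C : Fin N → α → ℝ}
    (hA : Integrable A μ) (hB : Integrable B μ) (hC : ∀ j, Integrable (C j) μ) :
    ∫ x, (A x - B x - ∑ j, C j x) ∂μ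
      = (∫ x, A x ∂μ) - (∫ x, B x ∂μ) - ∑ j, ∫ x, C j x ∂μ := by
  have iCs : Integrable (fun x => ∑ j, C j x) μ := integrable_finset_sum _ fun j _ => hC j
  have h1 : ∫ x, (A x - B x - ∑ j, C j x) ∂μ
      = (∫ x, (A x - B x) ∂μ) - ∫ x, ∑ j, C j x ∂μ := integral_sub (hA.sub hB) iCs
  have h2 : ∫ x, (A x - B x) ∂μ = (∫ x, A x ∂μ) - ∫ x, B x ∂μ := integral_sub hA hB
  rw [h1, h2, integral_finset_sum _ fun j _ => hC j]


/-- Euler–Lagrange part of Theorem 4.4, Rayleigh–Ritz for higher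
modes. A minimizer of `D[Φ] + S[ξ]` over the class `𝒜_m` of admissible pairs
orthogonal to the first `m−1` eigenpairs, subject to `⟨Φ,ξ⟩_F = 1`, is a weak
solution of the sloshing problem with surface tension, with eigenvalue
`ω_m = D[Φ_m] + S[ξ_m]`. -/
theorem higher_mode_minimizer_is_weakSol
    (D : Set E3) (F : Set E2)
    (hD : Bornology.IsBounded D) (hF : Bornology.IsBounded F)
    (hDm : MeasurableSet D) (hFm : MeasurableSet F)
    (Bo : ℝ) (hBo : 0 < Bo)
    (m : ℕ) (hm : 1 < m)
    (ωs : Fin (m - 1) → ℝ) (Φs : Fin (m - 1) → E3 → ℝ) (ξs : Fin (m - 1) → E2 → ℝ)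
    (hsol : ∀ j, IsWeakSol D F Bo (ωs j) (Φs j) (ξs j))
    (hdist : ∀ j k, j ≠ k → |ωs j| ≠ |ωs k|)
    (hpairs : ∀ j, pairF F (Φs j) (ξs j) ≠ 0)
    (Φm : E3 → ℝ) (ξm : E2 → ℝ)
    (hadm : Adm F Φm ξm)
    (horth : ∀ j, (∫ p in F, Φm (emb p) * ξs j p) = 0 ∧
      (∫ p in F, ξm p * Φs j (emb p)) = 0)
    (hpair : pairF F Φm ξm = 1)
    (hmin : ∀ Φ : E3 → ℝ, ∀ ξ : E2 → ℝ, Adm F Φ ξ →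
      (∀ j, (∫ p in F, Φ (emb p) * ξs j p) = 0 ∧
        (∫ p in F, ξ p * Φs j (emb p)) = 0) →
      pairF F Φ ξ = 1 →
      Dir D Φm + Surf F Bo ξm ≤ Dir D Φ + Surf F Bo ξ) :
    IsWeakSol D F Bo (Dir D Φm + Surf F Bo ξm) Φm ξm := by
  obtain ⟨hΦm, hξm, hΦm0, hξm0⟩ := hadm
  have hCΦ : ∀ j, ContDiff ℝ 1 (Φs j) := fun j => (hsol j).1
  have hCξ : ∀ j, ContDiff ℝ 1 (ξs j) := fun j => (hsol j).2.1
  have hK := fun j => (hsol j).2.2.1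
  have hDe := fun j => (hsol j).2.2.2
  have cΦm : Continuous fun p : E2 => Φm (emb p) := hΦm.continuous.comp continuous_emb
  -- the measure of F is positive and finite
  have hFfin : volume F ≠ ⊤ :=
    (lt_of_le_of_lt (measure_mono subset_closure) hF.isCompact_closure.measure_lt_top).ne
  have hFne : volume F ≠ 0 := by
    intro h0
    rw [pairF, Measure.restrict_eq_zero.mpr h0, integral_zero_measure] at hpair
    exact one_ne_zero hpair.symm
  have hvF : 0 < (volume F).toReal := ENNReal.toReal_pos hFne hFfin
  -- eigenvalues are nonzero
  have hω0 : ∀ j, ωs j ≠ 0 := by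
    intro j hzero
    have h1 := hDe j (ξs j) (hCξ j)
    rw [hzero, zero_mul] at h1
    have hnn : ∀ p : E2, 0 ≤ ξs j p * ξs j p + Bo⁻¹ * ⟪gradient (ξs j) p, gradient (ξs j) p⟫ :=
      fun p => add_nonneg (mul_self_nonneg _)
        (mul_nonneg (inv_nonneg.mpr hBo.le) real_inner_self_nonneg)
    have hint : IntegrableOn
        (fun p => ξs j p * ξs j p + Bo⁻¹ * ⟪gradient (ξs j) p, gradient (ξs j) p⟫) F volume :=
      integrableOn_cont hF (((hCξ j).continuous.mul (hCξ j).continuous).add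
        (continuous_const.mul
          ((continuous_gradient (hCξ j)).inner (continuous_gradient (hCξ j)))))
    have hae := (integral_eq_zero_iff_of_nonneg (fun p => hnn p) hint).mp h1
    have hz : pairF F (Φs j) (ξs j) = 0 := by
      rw [pairF]
      have hae2 : (fun p => Φs j (emb p) * ξs j p) =ᵐ[volume.restrict F] 0 := by
        filter_upwards [hae] with p hp
        simp only [Pi.zero_apply] at hp ⊢
        have hι : 0 ≤ ⟪gradient (ξs j) p, gradient (ξs j) p⟫ := real_inner_self_nonneg
        have hb : 0 ≤ Bo⁻¹ := inv_nonneg.mpr hBo.le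
        have h3 : ξs j p * ξs j p = 0 :=
          le_antisymm (by nlinarith [mul_nonneg hb hι]) (mul_self_nonneg _)
        rw [mul_self_eq_zero.mp h3, mul_zero]
      rw [integral_congr_ae hae2]; simp
    exact hpairs j hz
  -- eigenfunctions have zero mean
  have gradK1 : ∀ j, ωs j * (∫ p in F, ξs j p) = 0 := by
    intro j
    have h1 := hK j (fun _ => (1:ℝ)) contDiff_const
    simp only [gradient_fun_const, inner_zero_right, integral_zero, mul_one] at h1
    exact h1.symm
  have hmeanξ : ∀ j, (∫ p in F, ξs j p) = 0 := by
    intro j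
    rcases mul_eq_zero.mp (gradK1 j) with h | h
    · exact absurd h (hω0 j)
    · exact h
  have hmeanΦ : ∀ j, (∫ p in F, Φs j (emb p)) = 0 := by
    intro j
    have h1 := hDe j (fun _ => (1:ℝ)) contDiff_const
    simp only [gradient_fun_const, inner_zero_right, mul_one, mul_zero, add_zero] at h1
    rw [hmeanξ j] at h1
    rcases mul_eq_zero.mp h1.symm with h | h
    · exact absurd h (hω0 j)
    · exact h
  -- cross orthogonality of distinct eigenpairs
  have hX : ∀ j k, j ≠ k → (∫ p in F, Φs j (emb p) * ξs k p) = 0 := by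
    intro j k hjk
    have hA1 := hK j (Φs k) (hCΦ k)
    have hA2 := hK k (Φs j) (hCΦ j)
    have hB1 := hDe j (ξs k) (hCξ k)
    have hB2 := hDe k (ξs j) (hCξ j)
    have hsymD : (∫ x in D, ⟪gradient (Φs j) x, gradient (Φs k) x⟫)
        = ∫ x in D, ⟪gradient (Φs k) x, gradient (Φs j) x⟫ := by
      congr 1; funext x; exact real_inner_comm _ _
    have hsymS : (∫ p in F, (ξs j p * ξs k p + Bo⁻¹ * ⟪gradient (ξs j) p, gradient (ξs k) p⟫))
        = ∫ p in F, (ξs k p * ξs j p + Bo⁻¹ * ⟪gradient (ξs k) p, gradient (ξs j) p⟫) := by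
      congr 1; funext p; rw [real_inner_comm, mul_comm (ξs j p)]
    have hflip1 : (∫ p in F, ξs j p * Φs k (emb p)) = ∫ p in F, Φs k (emb p) * ξs j p :=
      int_comm _ _
    have hflip2 : (∫ p in F, ξs k p * Φs j (emb p)) = ∫ p in F, Φs j (emb p) * ξs k p :=
      int_comm _ _
    have e1 : ωs j * (∫ p in F, Φs k (emb p) * ξs j p)
        = ωs k * (∫ p in F, Φs j (emb p) * ξs k p) := by
      rw [← hflip1, ← hflip2, ← hA1, ← hA2]; exact hsymD
    have e2 : ωs j * (∫ p in F, Φs j (emb p) * ξs k p)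
        = ωs k * (∫ p in F, Φs k (emb p) * ξs j p) := by
      rw [← hB1, ← hB2]; exact hsymS
    have hsqne : ωs j^2 - ωs k^2 ≠ 0 := by
      intro h
      apply hdist j k hjk
      have h2 : ωs j^2 = ωs k^2 := by linarith
      calc |ωs j| = Real.sqrt (ωs j^2) := (Real.sqrt_sq_eq_abs _).symm
        _ = Real.sqrt (ωs k^2) := by rw [h2]
        _ = |ωs k| := Real.sqrt_sq_eq_abs _
    have hkey : (ωs j^2 - ωs k^2) * (∫ p in F, Φs j (emb p) * ξs k p) = 0 := by
      linear_combination ωs j * e2 + ωs k * e1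
    rcases mul_eq_zero.mp hkey with h | h
    · exact absurd h hsqne
    · exact h
  -- Dirichlet and surface pairings of the minimizer against eigenfunctions vanish
  have hDj : ∀ j, (∫ x in D, ⟪gradient Φm x, gradient (Φs j) x⟫) = 0 := by
    intro j
    have h1 := hK j Φm hΦm
    have hsym : (∫ x in D, ⟪gradient Φm x, gradient (Φs j) x⟫)
        = ∫ x in D, ⟪gradient (Φs j) x, gradient Φm x⟫ := by
      congr 1; funext x; exact real_inner_comm _ _
    rw [hsym, h1, int_comm, (horth j).1, mul_zero]
  have hSj : ∀ j, (∫ p in F, (ξm p * ξs j p + Bo⁻¹ * ⟪gradient ξm p, gradient (ξs j) p⟫)) = 0 := by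
    intro j
    have h1 := hDe j ξm hξm
    have hsym : (∫ p in F, (ξm p * ξs j p + Bo⁻¹ * ⟪gradient ξm p, gradient (ξs j) p⟫))
        = ∫ p in F, (ξs j p * ξm p + Bo⁻¹ * ⟪gradient (ξs j) p, gradient ξm p⟫) := by
      congr 1; funext p; rw [real_inner_comm, mul_comm (ξm p)]
    rw [hsym, h1, int_comm, (horth j).2, mul_zero]
  -- the key Euler–Lagrange identity for arbitrary test pairs
  have key : ∀ (f : E3 → ℝ) (g : E2 → ℝ), ContDiff ℝ 1 f → ContDiff ℝ 1 g →
      (∫ x in D, ⟪gradient Φm x, gradient f x⟫)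
        + (∫ p in F, (ξm p * g p + Bo⁻¹ * ⟪gradient ξm p, gradient g p⟫))
      = (Dir D Φm + Surf F Bo ξm)
        * ((∫ p in F, Φm (emb p) * g p) + (∫ p in F, f (emb p) * ξm p)) := by
    intro f g hf hg
    set c : Fin (m-1) → ℝ :=
      fun j => (∫ p in F, f (emb p) * ξs j p) / pairF F (Φs j) (ξs j) with hc
    set c₀ : ℝ := (∫ p in F, f (emb p)) / (volume F).toReal with hc0
    set d : Fin (m-1) → ℝ :=
      fun j => (∫ p in F, g p * Φs j (emb p)) / pairF F (Φs j) (ξs j) with hd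
    set d₀ : ℝ := (∫ p in F, g p) / (volume F).toReal with hd0
    have hf' : ContDiff ℝ 1 (fun x : E3 => f x - c₀ - ∑ j, c j * Φs j x) :=
      (hf.sub contDiff_const).sub (ContDiff.sum fun j _ => contDiff_const.mul (hCΦ j))
    have hg' : ContDiff ℝ 1 (fun p : E2 => g p - d₀ - ∑ j, d j * ξs j p) :=
      (hg.sub contDiff_const).sub (ContDiff.sum fun j _ => contDiff_const.mul (hCξ j))
    have cf : Continuous fun p : E2 => f (emb p) := hf.continuous.comp continuous_emb
    have cΦ : ∀ j, Continuous fun p : E2 => Φs j (emb p) :=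
      fun j => (hCΦ j).continuous.comp continuous_emb
    -- mean-zero of corrections
    have hmean1 : (∫ p in F, (f (emb p) - c₀ - ∑ j, c j * Φs j (emb p))) = 0 := by
      rw [int_correction_mean hF cf (fun j => cΦ j) c₀ c]
      have h1 : c₀ * (volume F).toReal = ∫ p in F, f (emb p) := by
        rw [hc0]; exact div_mul_cancel₀ _ hvF.ne'
      have h2 : (∑ j, c j * ∫ p in F, Φs j (emb p)) = 0 :=
        Finset.sum_eq_zero fun j _ => by rw [hmeanΦ j, mul_zero]
      rw [h1, h2]; ring
    have hmean2 : (∫ p in F, (g p - d₀ - ∑ j, d j * ξs j p)) = 0 := by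
      rw [int_correction_mean hF hg.continuous (fun j => (hCξ j).continuous) d₀ d]
      have h1 : d₀ * (volume F).toReal = ∫ p in F, g p := by
        rw [hd0]; exact div_mul_cancel₀ _ hvF.ne'
      have h2 : (∑ j, d j * ∫ p in F, ξs j p) = 0 :=
        Finset.sum_eq_zero fun j _ => by rw [hmeanξ j, mul_zero]
      rw [h1, h2]; ring
    -- orthogonality of corrections
    have horthf : ∀ k, (∫ p in F, (f (emb p) - c₀ - ∑ j, c j * Φs j (emb p)) * ξs k p) = 0 := by
      intro k
      rw [int_correction hF cf (hCξ k).continuous (fun j => cΦ j) c₀ c, hmeanξ k]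
      have hsum : (∑ j, c j * ∫ p in F, Φs j (emb p) * ξs k p)
          = c k * pairF F (Φs k) (ξs k) := by
        rw [Finset.sum_eq_single k]
        · rfl
        · intro j _ hjne; rw [hX j k hjne, mul_zero]
        · intro h; exact absurd (Finset.mem_univ k) h
      have hck : c k * pairF F (Φs k) (ξs k) = ∫ p in F, f (emb p) * ξs k p := by
        simp only [hc]
        exact div_mul_cancel₀ _ (hpairs k)
      rw [hsum, hck]; ring
    have horthg : ∀ k, (∫ p in F, (g p - d₀ - ∑ j, d j * ξs j p) * Φs k (emb p)) = 0 := by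
      intro k
      rw [int_correction hF hg.continuous (cΦ k) (fun j => (hCξ j).continuous) d₀ d, hmeanΦ k]
      have hsum : (∑ j, d j * ∫ p in F, ξs j p * Φs k (emb p))
          = d k * pairF F (Φs k) (ξs k) := by
        rw [Finset.sum_eq_single k]
        · rw [int_comm]; rfl
        · intro j _ hjne; rw [int_comm, hX k j (Ne.symm hjne), mul_zero]
        · intro h; exact absurd (Finset.mem_univ k) h
      have hdk : d k * pairF F (Φs k) (ξs k) = ∫ p in F, g p * Φs k (emb p) := by
        simp only [hd]
        exact div_mul_cancel₀ _ (hpairs k)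
      rw [hsum, hdk]; ring
    -- gradient corrections
    have hgradf' := gradient_correction hf hCΦ c₀ c
    have hgradg' := gradient_correction hg hCξ d₀ d
    -- Dirichlet correction
    have hDcorr : (∫ x in D, ⟪gradient Φm x,
        gradient (fun y : E3 => f y - c₀ - ∑ j, c j * Φs j y) x⟫)
        = (∫ x in D, ⟪gradient Φm x, gradient f x⟫)
          - (∫ x in D, (0:ℝ))
          - ∑ j, ∫ x in D, c j * ⟪gradient Φm x, gradient (Φs j) x⟫ := by
      have keyp : (fun x => ⟪gradient Φm x,
          gradient (fun y : E3 => f y - c₀ - ∑ j, c j * Φs j y) x⟫)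
          = fun x => ⟪gradient Φm x, gradient f x⟫ - (0:ℝ)
            - ∑ j, c j * ⟪gradient Φm x, gradient (Φs j) x⟫ := by
        funext x
        rw [hgradf' x, inner_sub_right, inner_sum, sub_zero]
        congr 1
        exact Finset.sum_congr rfl fun j _ => real_inner_smul_right _ _ _
      have iA : IntegrableOn (fun x => ⟪gradient Φm x, gradient f x⟫) D volume :=
        integrableOn_cont hD ((continuous_gradient hΦm).inner (continuous_gradient hf))
      have iB : IntegrableOn (fun _ : E3 => (0:ℝ)) D volume := integrableOn_cont hD continuous_const
      have iC : ∀ j, IntegrableOn (fun x => c j * ⟪gradient Φm x, gradient (Φs j) x⟫) D volume :=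
        fun j => integrableOn_cont hD
          (continuous_const.mul ((continuous_gradient hΦm).inner (continuous_gradient (hCΦ j))))
      rw [keyp]
      exact int_sub_sub iA iB iC
    -- surface correction
    have hScorr : (∫ p in F, (ξm p * (g p - d₀ - ∑ j, d j * ξs j p)
        + Bo⁻¹ * ⟪gradient ξm p, gradient (fun q : E2 => g q - d₀ - ∑ j, d j * ξs j q) p⟫))
        = (∫ p in F, (ξm p * g p + Bo⁻¹ * ⟪gradient ξm p, gradient g p⟫))
          - (∫ p in F, d₀ * ξm p)
          - ∑ j, ∫ p in F,
              d j * (ξm p * ξs j p + Bo⁻¹ * ⟪gradient ξm p, gradient (ξs j) p⟫) := by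
      have keyp : (fun p => ξm p * (g p - d₀ - ∑ j, d j * ξs j p)
          + Bo⁻¹ * ⟪gradient ξm p, gradient (fun q : E2 => g q - d₀ - ∑ j, d j * ξs j q) p⟫)
          = fun p => (ξm p * g p + Bo⁻¹ * ⟪gradient ξm p, gradient g p⟫) - d₀ * ξm p
            - ∑ j, d j * (ξm p * ξs j p + Bo⁻¹ * ⟪gradient ξm p, gradient (ξs j) p⟫) := by
        funext p
        rw [hgradg' p, inner_sub_right, inner_sum]
        have h1 : (∑ j, ⟪gradient ξm p, d j • gradient (ξs j) p⟫)
            = ∑ j, d j * ⟪gradient ξm p, gradient (ξs j) p⟫ :=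
          Finset.sum_congr rfl fun j _ => real_inner_smul_right _ _ _
        rw [h1]
        have h2 : (∑ j, d j * (ξm p * ξs j p + Bo⁻¹ * ⟪gradient ξm p, gradient (ξs j) p⟫))
            = ξm p * (∑ j, d j * ξs j p)
              + Bo⁻¹ * (∑ j, d j * ⟪gradient ξm p, gradient (ξs j) p⟫) := by
          rw [Finset.mul_sum, Finset.mul_sum, ← Finset.sum_add_distrib]
          exact Finset.sum_congr rfl fun j _ => by ring
        rw [h2]
        ring
      have iA : IntegrableOn
          (fun p => ξm p * g p + Bo⁻¹ * ⟪gradient ξm p, gradient g p⟫) F volume :=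
        integrableOn_cont hF ((hξm.continuous.mul hg.continuous).add
          (continuous_const.mul ((continuous_gradient hξm).inner (continuous_gradient hg))))
      have iB : IntegrableOn (fun p => d₀ * ξm p) F volume :=
        integrableOn_cont hF (continuous_const.mul hξm.continuous)
      have iC : ∀ j, IntegrableOn
          (fun p => d j * (ξm p * ξs j p + Bo⁻¹ * ⟪gradient ξm p, gradient (ξs j) p⟫)) F volume :=
        fun j => integrableOn_cont hF (continuous_const.mul
          ((hξm.continuous.mul (hCξ j).continuous).add
            (continuous_const.mul ((continuous_gradient hξm).inner (continuous_gradient (hCξ j))))))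
      rw [keyp]
      exact int_sub_sub iA iB iC
    -- pairing corrections
    have hQg : (∫ p in F, Φm (emb p) * (g p - d₀ - ∑ j, d j * ξs j p))
        = ∫ p in F, Φm (emb p) * g p := by
      rw [int_comm, int_correction hF hg.continuous cΦm (fun j => (hCξ j).continuous) d₀ d, hΦm0]
      have hsum : (∑ j, d j * ∫ p in F, ξs j p * Φm (emb p)) = 0 :=
        Finset.sum_eq_zero fun j _ => by rw [int_comm, (horth j).1, mul_zero]
      rw [hsum, int_comm]
      ring
    have hQf : (∫ p in F, (f (emb p) - c₀ - ∑ j, c j * Φs j (emb p)) * ξm p)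
        = ∫ p in F, f (emb p) * ξm p := by
      rw [int_correction hF cf hξm.continuous (fun j => cΦ j) c₀ c, hξm0]
      have hsum : (∑ j, c j * ∫ p in F, Φs j (emb p) * ξm p) = 0 :=
        Finset.sum_eq_zero fun j _ => by rw [int_comm, (horth j).2, mul_zero]
      rw [hsum]; ring
    -- apply the variational identity to the corrected pair
    have hstep := step1_lemma D F hD hF Bo Φs ξs (fun j => (hCΦ j).continuous)
      (fun j => (hCξ j).continuous) Φm ξm hΦm hξm hpair hmin
      (fun x => f x - c₀ - ∑ j, c j * Φs j x) (fun p => g p - d₀ - ∑ j, d j * ξs j p)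
      hf' hg' hmean1 hmean2 hΦm0 hξm0 (fun k => ⟨horthf k, horthg k⟩) horth
    beta_reduce at hstep
    rw [hDcorr, hScorr, hQg, hQf] at hstep
    have hz1 : (∑ j, ∫ x in D, c j * ⟪gradient Φm x, gradient (Φs j) x⟫) = 0 :=
      Finset.sum_eq_zero fun j _ => by rw [integral_const_mul, hDj j, mul_zero]
    have hz2 : (∑ j, ∫ p in F,
        d j * (ξm p * ξs j p + Bo⁻¹ * ⟪gradient ξm p, gradient (ξs j) p⟫)) = 0 :=
      Finset.sum_eq_zero fun j _ => by rw [integral_const_mul, hSj j, mul_zero]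
    have hz3 : (∫ p in F, d₀ * ξm p) = 0 := by rw [integral_const_mul, hξm0, mul_zero]
    have hz4 : (∫ x in D, (0:ℝ)) = 0 := integral_zero _ _
    rw [hz1, hz2, hz3, hz4] at hstep
    linarith [hstep]
  -- assemble the weak-solution structure
  refine ⟨hΦm, hξm, ?_, ?_⟩
  · intro f hf
    have h := key f (fun _ => (0:ℝ)) hf contDiff_const
    simp only [gradient_fun_const, inner_zero_right, mul_zero, zero_add, add_zero,
      integral_zero] at h
    rw [h]
    congr 1
    exact int_comm _ _
  · intro g hg
    have h := key (fun _ => (0:ℝ)) g contDiff_const hg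
    simp only [gradient_fun_const, inner_zero_right, mul_zero, zero_mul, zero_add, add_zero,
      integral_zero] at h
    exact h
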